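/- Let U ⊆ ℂ² be open and ρ : U → ℝ of class C² with ρ(z) > 0 and Levi matrix H(ρ)(z) positive definite at a point z ∈ U, and suppose the complex gradient Z satisfies Z(ρ)(z) := Σ_μ Z^μ(z)·∂ρ/∂z_μ(z) = ρ(z). Let L(z) = (∂ρ/∂z₂(z), −∂ρ/∂z₁(z)). Then Σ_{μ,ν} ρ_{μν̄}(z)·L^μ(z)·conj(L^ν(z)) = det H(ρ)(z) · ρ(z); i.e. the Levi form of ρ evaluated on (L, L̄) equals D·ρ, where D = det H(ρ). -/

import Mathlib

open Complex Matrix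
open scoped ComplexOrder

/-- The Wirtinger derivative `∂f/∂z_μ` of an `ℝ`-differentiable function `f : ℂⁿ → ℂ`. -/
noncomputable def wD {n : ℕ} (f : (Fin n → ℂ) → ℂ) (z : Fin n → ℂ) (μ : Fin n) : ℂ :=
  (1 / 2 : ℂ) *
    (fderiv ℝ f z (Pi.single μ 1) - Complex.I * fderiv ℝ f z (Pi.single μ Complex.I))

/-- The conjugate Wirtinger derivative `∂f/∂z̄_μ`. -/
noncomputable def wDbar {n : ℕ} (f : (Fin n → ℂ) → ℂ) (z : Fin n → ℂ) (μ : Fin n) : ℂ :=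
  (1 / 2 : ℂ) *
    (fderiv ℝ f z (Pi.single μ 1) + Complex.I * fderiv ℝ f z (Pi.single μ Complex.I))

/-- The Levi matrix `ρ_{μν̄} = ∂²ρ/∂z_μ∂z̄_ν` of a real-valued function `ρ : ℂⁿ → ℝ`. -/
noncomputable def levi {n : ℕ} (ρ : (Fin n → ℂ) → ℝ) (z : Fin n → ℂ) :
    Matrix (Fin n) (Fin n) ℂ :=
  Matrix.of fun μ ν => wD (fun w => wDbar (fun w' => (ρ w' : ℂ)) w ν) z μ

/-- The tangential `(1,0)` vector field `L` with components `L¹ = ∂ρ/∂z₂`,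
`L² = −∂ρ/∂z₁`. -/
noncomputable def Lfield (ρ : (Fin 2 → ℂ) → ℝ) (z : Fin 2 → ℂ) : Fin 2 → ℂ :=
  ![wD (fun w => (ρ w : ℂ)) z 1, -(wD (fun w => (ρ w : ℂ)) z 0)]

/-- Action of a `(1,0)` vector field `W`: `Wf = Σ_μ W^μ ∂f/∂z_μ`. -/
noncomputable def op10 {n : ℕ} (W : (Fin n → ℂ) → Fin n → ℂ) (f : (Fin n → ℂ) → ℂ)
    (z : Fin n → ℂ) : ℂ :=
  ∑ μ : Fin n, W z μ * wD f z μ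

/-- Action of the conjugate field `W̄`: `W̄f = Σ_μ conj(W^μ) ∂f/∂z̄_μ`. -/
noncomputable def op01 {n : ℕ} (W : (Fin n → ℂ) → Fin n → ℂ) (f : (Fin n → ℂ) → ℂ)
    (z : Fin n → ℂ) : ℂ :=
  ∑ μ : Fin n, (starRingEnd ℂ) (W z μ) * wDbar f z μ


lemma im_fderiv_ofReal {n : ℕ} (ρ : (Fin n → ℂ) → ℝ) (z v : Fin n → ℂ) :
    (fderiv ℝ (fun w => ((ρ w : ℂ))) z v).im = 0 := by
  by_cases h : DifferentiableAt ℝ ρ z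
  · have := (Complex.ofRealCLM.hasFDerivAt.comp z h.hasFDerivAt).fderiv
    rw [show (fun w => ((ρ w : ℂ))) = (Complex.ofRealCLM ∘ ρ) from rfl, this]
    simp
  · have h' : ¬ DifferentiableAt ℝ (fun w => ((ρ w : ℂ))) z := by
      intro h'
      exact h (by simpa [Function.comp_def] using (Complex.reCLM.differentiableAt.comp z h'))
    rw [fderiv_zero_of_not_differentiableAt h']
    simp

lemma conj_wD {n : ℕ} (ρ : (Fin n → ℂ) → ℝ) (z : Fin n → ℂ) (μ : Fin n) :
    (starRingEnd ℂ) (wD (fun w => ((ρ w : ℂ))) z μ) = wDbar (fun w => ((ρ w : ℂ))) z μ := by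
  have h1 := im_fderiv_ofReal ρ z (Pi.single μ 1)
  have h2 := im_fderiv_ofReal ρ z (Pi.single μ Complex.I)
  set a := fderiv ℝ (fun w => ((ρ w : ℂ))) z (Pi.single μ 1)
  set b := fderiv ℝ (fun w => ((ρ w : ℂ))) z (Pi.single μ Complex.I)
  have ha : (starRingEnd ℂ) a = a := Complex.conj_eq_iff_im.mpr h1
  have hb : (starRingEnd ℂ) b = b := Complex.conj_eq_iff_im.mpr h2
  simp only [wD, wDbar, _root_.map_mul, map_sub, map_add, map_div₀, RingHom.map_one,
    map_ofNat, Complex.conj_I, ha, hb]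
  rw [ha, hb]
  ring

/-- The Levi form of `ρ` evaluated on `(L, L̄)` equals `det H(ρ) · ρ`. -/
theorem leviForm_L_Lbar (U : Set (Fin 2 → ℂ)) (hU : IsOpen U)
    (ρ : (Fin 2 → ℂ) → ℝ) (hρ : ContDiffOn ℝ 2 ρ U)
    (z : Fin 2 → ℂ) (hz : z ∈ U) (hpos : 0 < ρ z)
    (hPD : (levi ρ z).PosDef)
    (Z : Fin 2 → ℂ)
    (hZ : ∀ ν : Fin 2, ∑ μ : Fin 2, Z μ * levi ρ z μ ν = wDbar (fun w => (ρ w : ℂ)) z ν)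
    (hMA : ∑ μ : Fin 2, Z μ * wD (fun w => (ρ w : ℂ)) z μ = (ρ z : ℂ)) :
    ∑ μ : Fin 2, ∑ ν : Fin 2,
        levi ρ z μ ν * Lfield ρ z μ * (starRingEnd ℂ) (Lfield ρ z ν) =
      (levi ρ z).det * (ρ z : ℂ) := by
  have h0 := hZ 0
  have h1 := hZ 1
  simp only [Fin.sum_univ_two] at h0 h1 hMA ⊢
  simp only [Lfield, Matrix.cons_val_zero, Matrix.cons_val_one, Matrix.head_cons,
    map_neg, conj_wD, Matrix.det_fin_two]
  linear_combination -(levi ρ z 0 0 * wD (fun w => ((ρ w : ℂ))) z 1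
      - levi ρ z 1 0 * wD (fun w => ((ρ w : ℂ))) z 0) * h1
    - (levi ρ z 1 1 * wD (fun w => ((ρ w : ℂ))) z 0
      - levi ρ z 0 1 * wD (fun w => ((ρ w : ℂ))) z 1) * h0
    + (levi ρ z 0 0 * levi ρ z 1 1 - levi ρ z 0 1 * levi ρ z 1 0) * hMA
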